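/- Let f : (F^n)^r → F be a polynomial of degree at most d, defining a directed r-uniform hypergraph H on a vertex set V ⊆ F^n where an r-tuple (v_1,…,v_r) of distinct vertices is an edge iff f(v_1,…,v_r) ≠ 0. Then for every k ∈ [r] and every s > C(n+d,d), there do not exist vertices u_{i,j} (i ∈ [s], j ∈ [r]) such that, defining X_{i,i'} to be the r-tuple with j-th coordinate u_{i,j} for j ≠ k and k-th coordinate u_{i',k}, we have f(X_{i,i}) ≠ 0 for all i ∈ [s] while f(X_{i,i'}) = 0 for all 1 ≤ i < i' ≤ s. -/

import Mathlib

open MvPolynomial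

open Finset in
lemma card_le_choose_aux (n d : ℕ) (T : Finset (Fin n → ℕ))
    (hT : ∀ μ ∈ T, ∑ t, μ t ≤ d) : T.card ≤ (n + d).choose d := by
  classical
  have h1 : ∀ μ : Fin n → ℕ,
      Multiset.card (∑ t, Multiset.replicate (μ t) (some t : Option (Fin n)))
        = ∑ t, μ t := by
    intro μ
    simp [Multiset.card_sum]
  have hcard : ∀ μ ∈ T,
      Multiset.card ((∑ t, Multiset.replicate (μ t) (some t : Option (Fin n)))
        + Multiset.replicate (d - ∑ t, μ t) (none : Option (Fin n))) = d := by
    intro μ hμ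
    rw [Multiset.card_add, h1, Multiset.card_replicate]
    have := hT μ hμ
    omega
  set ψ : (Fin n → ℕ) → Sym (Option (Fin n)) d := fun μ =>
    if h : Multiset.card ((∑ t, Multiset.replicate (μ t) (some t : Option (Fin n)))
        + Multiset.replicate (d - ∑ t, μ t) (none : Option (Fin n))) = d
    then ⟨_, h⟩ else ⟨Multiset.replicate d none, by simp⟩ with hψ
  have hcount : ∀ μ ∈ T, ∀ t : Fin n,
      Multiset.count (some t) ((ψ μ) : Multiset (Option (Fin n))) = μ t := by
    intro μ hμ t
    have hco : ((ψ μ) : Multiset (Option (Fin n)))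
        = (∑ t, Multiset.replicate (μ t) (some t : Option (Fin n)))
          + Multiset.replicate (d - ∑ t, μ t) (none : Option (Fin n)) := by
      have key : ψ μ = ⟨_, hcard μ hμ⟩ := dif_pos (hcard μ hμ)
      rw [key]
      rfl
    rw [hco, Multiset.count_add, Multiset.count_sum']
    simp [Multiset.count_replicate]
  have hinj : Set.InjOn ψ T := by
    intro a ha b hb hab
    funext t
    rw [← hcount a ha t, ← hcount b hb t, hab]
  have hle := Finset.card_le_card_of_injOn ψ (fun μ _ => Finset.mem_univ (ψ μ)) hinj
  have hcardsym : (Finset.univ : Finset (Sym (Option (Fin n)) d)).card = (n + d).choose d := by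
    rw [Finset.card_univ, Sym.card_sym_eq_choose]
    have : Fintype.card (Option (Fin n)) = n + 1 := by simp
    rw [this]
    congr 1
    omega
  omega

/-- An algebraic dihypergraph defined by a single degree-≤d polynomial contains no
member of M(r,s,k) for s > C(n+d,d). -/
theorem stmt_4 (F : Type) [Field F] (n d r s : ℕ) (hr : 0 < r)
    (hs : (n + d).choose d < s)
    (f : MvPolynomial (Fin r × Fin n) F) (hdeg : f.totalDegree ≤ d)
    (k : Fin r) :
    ¬ ∃ u : Fin s → Fin r → (Fin n → F),
      (∀ i : Fin s, eval (fun p : Fin r × Fin n =>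
          (if p.1 = k then u i k else u i p.1) p.2) f ≠ 0) ∧
      (∀ i i' : Fin s, i < i' → eval (fun p : Fin r × Fin n =>
          (if p.1 = k then u i' k else u i p.1) p.2) f = 0) := by
  classical
  rintro ⟨u, hdiag, hoff⟩
  -- evaluation points
  set P : Fin s → Fin s → (Fin r × Fin n → F) := fun i i' p =>
    (if p.1 = k then u i' k else u i p.1) p.2 with hP
  set M : Matrix (Fin s) (Fin s) F := Matrix.of (fun i i' => eval (P i i') f) with hM
  -- M is lower triangular with nonzero diagonal, so invertible
  have hMdiag : ∀ i, M i i ≠ 0 := fun i => hdiag i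
  have hMtri : M.BlockTriangular OrderDual.toDual := by
    intro i j h
    exact hoff i j h
  have hdet : M.det ≠ 0 := by
    rw [Matrix.det_of_lowerTriangular M hMtri]
    exact Finset.prod_ne_zero_iff.2 fun i _ => hMdiag i
  have hrankM : M.rank = s := by
    rw [Matrix.rank_of_isUnit M (Matrix.isUnit_iff_isUnit_det M |>.2 (isUnit_iff_ne_zero.2 hdet))]
    simp
  -- factorization
  set res : ((Fin r × Fin n) →₀ ℕ) → (Fin n → ℕ) := fun m t => m (k, t) with hres
  set T : Finset (Fin n → ℕ) := f.support.image res with hT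
  set A : Matrix (Fin s) T F := Matrix.of (fun i μ =>
    ∑ m ∈ f.support.filter (fun m => res m = μ.1),
      f.coeff m * ∏ j ∈ Finset.univ.erase k, ∏ t, (u i j t) ^ (m (j, t))) with hA
  set B : Matrix T (Fin s) F := Matrix.of (fun μ i' =>
    ∏ t, (u i' k t) ^ (μ.1 t)) with hB
  have hfact : M = A * B := by
    ext i i'
    rw [Matrix.mul_apply]
    -- RHS
    have hrhs : ∑ μ : T, A i μ * B μ i'
        = ∑ m ∈ f.support, f.coeff m *
            ((∏ t, (u i' k t) ^ (m (k, t))) * ∏ j ∈ Finset.univ.erase k, ∏ t, (u i j t) ^ (m (j, t))) := by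
      rw [← Finset.sum_fiberwise_of_maps_to (g := res) (t := T)
        (fun m hm => Finset.mem_image_of_mem res hm)
        (fun m => f.coeff m *
          ((∏ t, (u i' k t) ^ (m (k, t))) * ∏ j ∈ Finset.univ.erase k, ∏ t, (u i j t) ^ (m (j, t))))]
      rw [← Finset.sum_attach T (fun μ => ∑ m ∈ f.support.filter (fun m => res m = μ), f.coeff m *
          ((∏ t, (u i' k t) ^ (m (k, t))) * ∏ j ∈ Finset.univ.erase k, ∏ t, (u i j t) ^ (m (j, t))))]
      apply Finset.sum_congr rfl
      intro μ _
      rw [hA, hB]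
      simp only [Matrix.of_apply]
      rw [Finset.sum_mul]
      apply Finset.sum_congr rfl
      intro m hm
      have hresm : res m = μ.1 := (Finset.mem_filter.1 hm).2
      have : ∀ t, m (k, t) = μ.1 t := fun t => congrFun hresm t
      simp only [this]
      ring
    rw [hrhs, hM]
    simp only [Matrix.of_apply]
    rw [eval_eq']
    apply Finset.sum_congr rfl
    intro m _
    congr 1
    rw [Fintype.prod_prod_type]
    rw [← Finset.mul_prod_erase Finset.univ _ (Finset.mem_univ k)]
    congr 1
    · apply Finset.prod_congr rfl
      intro t _
      simp [hP]
    · apply Finset.prod_congr rfl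
      intro j hj
      have hjk : j ≠ k := (Finset.mem_erase.1 hj).1
      apply Finset.prod_congr rfl
      intro t _
      simp [hP, hjk]
  -- degree bound on T
  have hTdeg : ∀ μ ∈ T, ∑ t, μ t ≤ d := by
    intro μ hμ
    obtain ⟨m, hm, rfl⟩ := Finset.mem_image.1 hμ
    have h1 : ∑ t, res m t ≤ ∑ j : Fin r, ∑ t, m (j, t) :=
      Finset.single_le_sum (f := fun j => ∑ t, m (j, t)) (fun j _ => Nat.zero_le _) (Finset.mem_univ k)
    have h2 : ∑ j : Fin r, ∑ t, m (j, t) = m.sum fun _ e => e := by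
      rw [Finsupp.sum_fintype _ _ (fun _ => rfl), Fintype.sum_prod_type]
    have h3 : (m.sum fun _ e => e) ≤ f.totalDegree :=
      MvPolynomial.le_totalDegree hm
    omega
  have hcard : T.card ≤ (n + d).choose d := card_le_choose_aux n d T hTdeg
  -- rank contradiction
  have : M.rank ≤ T.card := by
    rw [hfact]
    exact (Matrix.rank_mul_le_left A B).trans ((Matrix.rank_le_card_width A).trans_eq (Fintype.card_coe T))
  omega
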